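/- (Corollary 1, case T > B_d(n_c+n_o).) Let n_l ≥ 0 be an integer, and extend the SGD process by a final block: w_{B_l}^0 = w_{B_d}^{n_p} and w_{B_l}^j = w_{B_l}^{j−1} − α∇ℓ(w_{B_l}^{j−1}, ξ^j) for 1 ≤ j ≤ n_l, where the ξ^j are independent and uniformly distributed on the full training set 𝒳, independent of all previous samples. Then E[L(w_{B_l}^{n_l})] − L(w*) ≤ α²LM/(2γc) + (1/B_d)(1 − γc)^{n_l} Σ_{l=0}^{B_d−1} (1 − γc)^{l·n_p} · (L·D²/2 − α²LM/(2γc)). -/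

import Mathlib

open Finset

/-- Empirical loss of `ℓ` over the finite set `S`: `F_S(w) = (1/|S|) ∑_{x ∈ S} ℓ(w, x)`. -/
noncomputable def empLoss {H 𝒟 : Type*} (ℓ : H → 𝒟 → ℝ) (S : Finset 𝒟) (w : H) : ℝ :=
  (S.card : ℝ)⁻¹ * ∑ x ∈ S, ℓ w x

/-- `X̃_b = 𝒳_1 ∪ ⋯ ∪ 𝒳_{b-1}`, the samples available at the edge node at block `b`. -/
def availSet {𝒟 : Type*} [DecidableEq 𝒟] (X : ℕ → Finset 𝒟) (b : ℕ) : Finset 𝒟 :=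
  (Finset.Icc 1 (b - 1)).biUnion X

/-- Sample space for the pipelined SGD process: a realization assigns, to each block
`b = i + 2` with `2 ≤ b ≤ B_d` and each update index `j ∈ {1,…,n_p}`, a sample
`ξ_b^j ∈ X̃_b`; the uniform distribution on this finite type is the product of the
uniform distributions on the `X̃_b`'s (i.i.d. samples). -/
def SampleSpace {𝒟 : Type*} [DecidableEq 𝒟] (X : ℕ → Finset 𝒟) (Bd np : ℕ) : Type _ :=
  (i : Fin (Bd - 1)) → Fin np → {x // x ∈ availSet X (i.val + 2)}

noncomputable instance {𝒟 : Type*} [DecidableEq 𝒟] (X : ℕ → Finset 𝒟) (Bd np : ℕ) :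
    Fintype (SampleSpace X Bd np) := by
  unfold SampleSpace; infer_instance

/-- Expectation with respect to the uniform distribution over a finite type `Ω`. -/
noncomputable def unifExp {Ω : Type*} [Fintype Ω] (f : Ω → ℝ) : ℝ :=
  (Fintype.card Ω : ℝ)⁻¹ * ∑ ω : Ω, f ω


section Aux

variable {H : Type*} [NormedAddCommGroup H] [InnerProductSpace ℝ H] [CompleteSpace H]
variable {𝒟 : Type*}

lemma hasGradientAt_empLoss (ℓ : H → 𝒟 → ℝ)
    (hdiff : ∀ x : 𝒟, Differentiable ℝ (fun w => ℓ w x)) (S : Finset 𝒟) (w : H) :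
    HasGradientAt (empLoss ℓ S)
      ((S.card : ℝ)⁻¹ • ∑ x ∈ S, gradient (fun v => ℓ v x) w) w := by
  rw [hasGradientAt_iff_hasFDerivAt]
  have h1 : HasFDerivAt (fun w => ∑ x ∈ S, ℓ w x)
      (∑ x ∈ S, (InnerProductSpace.toDual ℝ H) (gradient (fun v => ℓ v x) w)) w :=
    HasFDerivAt.fun_sum fun x _ =>
      (hasGradientAt_iff_hasFDerivAt.mp ((hdiff x w).hasGradientAt))
  have h2 := h1.const_mul ((S.card : ℝ)⁻¹)
  have : (InnerProductSpace.toDual ℝ H)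
      ((S.card : ℝ)⁻¹ • ∑ x ∈ S, gradient (fun v => ℓ v x) w)
      = (S.card : ℝ)⁻¹ • ∑ x ∈ S, (InnerProductSpace.toDual ℝ H)
          (gradient (fun v => ℓ v x) w) := by
    rw [map_smul, map_sum]
  rw [this]
  exact h2

lemma gradient_empLoss (ℓ : H → 𝒟 → ℝ)
    (hdiff : ∀ x : 𝒟, Differentiable ℝ (fun w => ℓ w x)) (S : Finset 𝒟) (w : H) :
    gradient (empLoss ℓ S) w
      = (S.card : ℝ)⁻¹ • ∑ x ∈ S, gradient (fun v => ℓ v x) w :=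
  (hasGradientAt_empLoss ℓ hdiff S w).gradient

lemma empLoss_differentiable (ℓ : H → 𝒟 → ℝ)
    (hdiff : ∀ x : 𝒟, Differentiable ℝ (fun w => ℓ w x)) (S : Finset 𝒟) :
    Differentiable ℝ (empLoss ℓ S) :=
  fun w => (hasGradientAt_empLoss ℓ hdiff S w).differentiableAt

lemma empLoss_lipschitz_grad (ℓ : H → 𝒟 → ℝ) {L : ℝ} (hL : 0 ≤ L)
    (hdiff : ∀ x : 𝒟, Differentiable ℝ (fun w => ℓ w x))
    (hLip : ∀ (x : 𝒟) (w u : H),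
      ‖gradient (fun v => ℓ v x) w - gradient (fun v => ℓ v x) u‖ ≤ L * ‖w - u‖)
    (S : Finset 𝒟) (w u : H) :
    ‖gradient (empLoss ℓ S) w - gradient (empLoss ℓ S) u‖ ≤ L * ‖w - u‖ := by
  rw [gradient_empLoss ℓ hdiff S w, gradient_empLoss ℓ hdiff S u, ← smul_sub,
    ← Finset.sum_sub_distrib]
  rcases Finset.eq_empty_or_nonempty S with h | h
  · simp [h]; positivity
  have hc : (0:ℝ) < (S.card : ℝ) := by
    exact_mod_cast Finset.card_pos.mpr h
  calc ‖(S.card : ℝ)⁻¹ • ∑ x ∈ S,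
        (gradient (fun v => ℓ v x) w - gradient (fun v => ℓ v x) u)‖
      ≤ (S.card : ℝ)⁻¹ * ∑ x ∈ S, (L * ‖w - u‖) := by
        rw [norm_smul, norm_inv, Real.norm_natCast]
        exact mul_le_mul_of_nonneg_left
          ((norm_sum_le _ _).trans (Finset.sum_le_sum fun x _ => hLip x w u))
          (by positivity)
    _ = L * ‖w - u‖ := by
        rw [Finset.sum_const, nsmul_eq_mul]
        field_simp

end Aux


section Aux2

variable {H : Type*} [NormedAddCommGroup H] [InnerProductSpace ℝ H] [CompleteSpace H]

/-- Descent lemma: quadratic upper bound for a function with Lipschitz gradient. -/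
lemma descent_lemma {f : H → ℝ} {L : ℝ}
    (hf : Differentiable ℝ f)
    (hlip : ∀ w u : H, ‖gradient f w - gradient f u‖ ≤ L * ‖w - u‖)
    (v w : H) :
    f w ≤ f v + inner ℝ (gradient f v) (w - v) + L / 2 * ‖w - v‖ ^ 2 := by
  set d := w - v with hd
  have hφ : ∀ t : ℝ, HasDerivAt (fun t : ℝ => v + t • d) d t := by
    intro t
    simpa using ((hasDerivAt_id t).smul_const d).const_add v
  have hg : ∀ t : ℝ, HasDerivAt (fun t : ℝ => f (v + t • d))
      (inner ℝ (gradient f (v + t • d)) d : ℝ) t := by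
    intro t
    have h1 : HasFDerivAt f ((InnerProductSpace.toDual ℝ H) (gradient f (v + t • d)))
        (v + t • d) :=
      hasGradientAt_iff_hasFDerivAt.mp (hf _).hasGradientAt
    have h2 := h1.comp_hasDerivAt t (hφ t)
    rw [InnerProductSpace.toDual_apply_apply] at h2
    exact h2
  set c1 : ℝ := inner ℝ (gradient f v) d with hc1
  set c2 : ℝ := L / 2 * ‖d‖ ^ 2 with hc2
  set ψ : ℝ → ℝ := fun t => f (v + t • d) - t * c1 - t ^ 2 * c2 with hψdef
  have hψ : ∀ t : ℝ, HasDerivAt ψ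
      ((inner ℝ (gradient f (v + t • d)) d : ℝ) - c1 - 2 * t * c2) t := by
    intro t
    have h2 : HasDerivAt (fun t : ℝ => t * c1) c1 t := by
      simpa using (hasDerivAt_id t).mul_const c1
    have h3 : HasDerivAt (fun t : ℝ => t ^ 2 * c2) (2 * t * c2) t := by
      simpa using (hasDerivAt_pow 2 t).mul_const c2
    exact ((hg t).sub h2).sub h3
  have hmono : AntitoneOn ψ (Set.Icc (0:ℝ) 1) := by
    apply antitoneOn_of_deriv_nonpos (convex_Icc 0 1)
    · exact Continuous.continuousOn (by
        have : Differentiable ℝ ψ := fun t => (hψ t).differentiableAt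
        exact this.continuous)
    · intro t _
      exact (hψ t).differentiableAt.differentiableWithinAt
    · intro t ht
      rw [interior_Icc] at ht
      rw [(hψ t).deriv]
      have hb : (inner ℝ (gradient f (v + t • d)) d : ℝ) - c1 ≤ t * L * ‖d‖ ^ 2 := by
        have : (inner ℝ (gradient f (v + t • d)) d : ℝ) - c1
            = inner ℝ (gradient f (v + t • d) - gradient f v) d := by
          rw [hc1, inner_sub_left]
        rw [this]
        calc (inner ℝ (gradient f (v + t • d) - gradient f v) d : ℝ)
            ≤ ‖gradient f (v + t • d) - gradient f v‖ * ‖d‖ := real_inner_le_norm _ _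
          _ ≤ (L * ‖(v + t • d) - v‖) * ‖d‖ :=
              mul_le_mul_of_nonneg_right (hlip _ _) (norm_nonneg d)
          _ = t * L * ‖d‖ ^ 2 := by
              rw [add_sub_cancel_left, norm_smul, Real.norm_eq_abs,
                abs_of_pos ht.1]
              ring
      have : 2 * t * c2 = t * L * ‖d‖ ^ 2 := by rw [hc2]; ring
      linarith
  have h01 := hmono (Set.mem_Icc.mpr ⟨le_refl 0, zero_le_one⟩)
    (Set.mem_Icc.mpr ⟨zero_le_one, le_refl 1⟩) zero_le_one
  have hψ0 : ψ 0 = f v := by simp [hψdef]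
  have hψ1 : ψ 1 = f w - c1 - c2 := by simp [hψdef, hd]
  rw [hψ0, hψ1] at h01
  rw [hc1, hc2] at h01
  linarith

lemma gradient_eq_zero_of_min {f : H → ℝ} (hf : Differentiable ℝ f) {v : H}
    (h : ∀ w, f v ≤ f w) : gradient f v = 0 := by
  have hloc : IsLocalMin f v := Filter.Eventually.of_forall h
  have hfd : fderiv ℝ f v = 0 := hloc.fderiv_eq_zero
  have h1 : HasFDerivAt f ((InnerProductSpace.toDual ℝ H) (gradient f v)) v :=
    hasGradientAt_iff_hasFDerivAt.mp (hf v).hasGradientAt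
  have h2 : (InnerProductSpace.toDual ℝ H) (gradient f v) = 0 := by
    rw [← hfd]; exact h1.fderiv.symm
  have := (InnerProductSpace.toDual ℝ H).map_eq_zero_iff.mp h2
  exact this

end Aux2


section UE
variable {Ω Ω' Ω₁ Ω₂ : Type*} [Fintype Ω] [Fintype Ω'] [Fintype Ω₁] [Fintype Ω₂]

lemma unifExp_congr {f g : Ω → ℝ} (h : ∀ ω, f ω = g ω) : unifExp f = unifExp g := by
  unfold unifExp; rw [Finset.sum_congr rfl fun ω _ => h ω]

lemma unifExp_comp_equiv (e : Ω ≃ Ω') (g : Ω' → ℝ) :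
    unifExp (fun ω => g (e ω)) = unifExp g := by
  unfold unifExp
  rw [Fintype.card_congr e, Equiv.sum_comp e g]

lemma unifExp_const [Nonempty Ω] (r : ℝ) : unifExp (fun _ : Ω => r) = r := by
  unfold unifExp
  rw [Finset.sum_const, Finset.card_univ, nsmul_eq_mul]
  have : (Fintype.card Ω : ℝ) ≠ 0 := by
    exact_mod_cast Fintype.card_ne_zero
  field_simp

lemma unifExp_mono {f g : Ω → ℝ} (h : ∀ ω, f ω ≤ g ω) : unifExp f ≤ unifExp g :=
  mul_le_mul_of_nonneg_left (Finset.sum_le_sum fun ω _ => h ω) (by positivity)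

lemma unifExp_le [Nonempty Ω] {f : Ω → ℝ} {r : ℝ} (h : ∀ ω, f ω ≤ r) :
    unifExp f ≤ r :=
  (unifExp_mono h).trans_eq (unifExp_const r)

lemma unifExp_add (f g : Ω → ℝ) :
    unifExp (fun ω => f ω + g ω) = unifExp f + unifExp g := by
  unfold unifExp; rw [Finset.sum_add_distrib]; ring

lemma unifExp_mul_left (a : ℝ) (f : Ω → ℝ) :
    unifExp (fun ω => a * f ω) = a * unifExp f := by
  unfold unifExp; rw [← Finset.mul_sum]; ring

lemma unifExp_affine [Nonempty Ω] (a b : ℝ) (f : Ω → ℝ) :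
    unifExp (fun ω => a * f ω + b) = a * unifExp f + b := by
  rw [unifExp_add, unifExp_mul_left, unifExp_const]

lemma unifExp_prod (f : Ω₁ × Ω₂ → ℝ) :
    unifExp f = unifExp (fun a => unifExp (fun b => f (a, b))) := by
  unfold unifExp
  rw [Fintype.card_prod, Fintype.sum_prod_type]
  push_cast
  rw [← Finset.mul_sum, mul_inv]
  ring

lemma unifExp_fst [Nonempty Ω₂] (g : Ω₁ → ℝ) :
    unifExp (fun p : Ω₁ × Ω₂ => g p.1) = unifExp g := by
  rw [unifExp_prod]
  exact unifExp_congr fun a => unifExp_const (g a)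

lemma unifExp_subtype {𝒟 : Type*} (T : Finset 𝒟) (g : 𝒟 → ℝ) :
    unifExp (fun y : {x // x ∈ T} => g y.1) = (T.card : ℝ)⁻¹ * ∑ x ∈ T, g x := by
  unfold unifExp
  rw [Fintype.card_coe]
  congr 1
  exact Finset.sum_coe_sort T g

end UE


section Step
variable {H 𝒟 : Type*} [NormedAddCommGroup H] [InnerProductSpace ℝ H] [CompleteSpace H]

lemma step_avg (ℓ : H → 𝒟 → ℝ) (L M MG α γ c : ℝ)
    (hL : 0 < L) (hα : 0 < α)
    (hγ : γ = α * (1 - α * L * MG / 2)) (hγ0 : 0 ≤ γ) (hc : 0 < c)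
    (hdiff : ∀ x : 𝒟, Differentiable ℝ (fun w => ℓ w x))
    (hLip : ∀ (x : 𝒟) (w u : H),
      ‖gradient (fun v => ℓ v x) w - gradient (fun v => ℓ v x) u‖ ≤ L * ‖w - u‖)
    (T : Finset 𝒟) (hT : T.Nonempty) (wstar : H)
    (hsecond : ∀ w : H, (T.card : ℝ)⁻¹ * ∑ x ∈ T, ‖gradient (fun v => ℓ v x) w‖ ^ 2
        ≤ M + MG * ‖gradient (empLoss ℓ T) w‖ ^ 2)
    (hmin : ∀ w : H, empLoss ℓ T wstar ≤ empLoss ℓ T w)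
    (hPL : ∀ w : H, 2 * c * (empLoss ℓ T w - empLoss ℓ T wstar)
        ≤ ‖gradient (empLoss ℓ T) w‖ ^ 2)
    (v : H) :
    (T.card : ℝ)⁻¹ * ∑ x ∈ T, empLoss ℓ T (v - α • gradient (fun z => ℓ z x) v)
      ≤ (1 - γ * c) * (empLoss ℓ T v - empLoss ℓ T wstar) + empLoss ℓ T wstar
        + α ^ 2 * L * M / 2 := by
  set F := empLoss ℓ T with hF
  set G := gradient F v with hG
  set g : 𝒟 → H := fun x => gradient (fun z => ℓ z x) v with hg
  have hFdiff : Differentiable ℝ F := empLoss_differentiable ℓ hdiff T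
  have hFlip : ∀ w u : H, ‖gradient F w - gradient F u‖ ≤ L * ‖w - u‖ :=
    empLoss_lipschitz_grad ℓ hL.le hdiff hLip T
  have hn : (0:ℝ) < (T.card : ℝ) := by exact_mod_cast Finset.card_pos.mpr hT
  -- pointwise descent bound
  have key : ∀ x ∈ T, F (v - α • g x)
      ≤ F v - α * inner ℝ G (g x) + (L / 2 * α ^ 2) * ‖g x‖ ^ 2 := by
    intro x _
    have h1 := descent_lemma hFdiff hFlip v (v - α • g x)
    have h2 : v - α • g x - v = -(α • g x) := by abel
    have h3 : (inner ℝ G (v - α • g x - v) : ℝ) = -(α * inner ℝ G (g x)) := by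
      rw [h2, inner_neg_right, real_inner_smul_right]
    have h4 : ‖v - α • g x - v‖ ^ 2 = α ^ 2 * ‖g x‖ ^ 2 := by
      rw [h2, norm_neg, norm_smul, Real.norm_eq_abs, abs_of_pos hα, mul_pow]
    rw [h3, h4] at h1
    calc F (v - α • g x) ≤ F v + -(α * inner ℝ G (g x)) + L / 2 * (α ^ 2 * ‖g x‖ ^ 2) := h1
      _ = F v - α * inner ℝ G (g x) + (L / 2 * α ^ 2) * ‖g x‖ ^ 2 := by ring
  -- sum it
  have hsum : (T.card : ℝ)⁻¹ * ∑ x ∈ T, F (v - α • g x)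
      ≤ F v - α * ‖G‖ ^ 2
        + (L / 2 * α ^ 2) * ((T.card : ℝ)⁻¹ * ∑ x ∈ T, ‖g x‖ ^ 2) := by
    have h5 : ∑ x ∈ T, F (v - α • g x)
        ≤ ∑ x ∈ T, (F v - α * inner ℝ G (g x) + (L / 2 * α ^ 2) * ‖g x‖ ^ 2) :=
      Finset.sum_le_sum key
    have h6 : ∑ x ∈ T, (F v - α * inner ℝ G (g x) + (L / 2 * α ^ 2) * ‖g x‖ ^ 2)
        = (T.card : ℝ) * F v - α * inner ℝ G (∑ x ∈ T, g x)
          + (L / 2 * α ^ 2) * ∑ x ∈ T, ‖g x‖ ^ 2 := by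
      rw [Finset.sum_add_distrib, Finset.sum_sub_distrib, Finset.sum_const,
        nsmul_eq_mul, inner_sum, ← Finset.mul_sum, ← Finset.mul_sum]
    have h7 : (inner ℝ G ((T.card : ℝ)⁻¹ • ∑ x ∈ T, g x) : ℝ) = ‖G‖ ^ 2 := by
      have : (T.card : ℝ)⁻¹ • ∑ x ∈ T, g x = G := (gradient_empLoss ℓ hdiff T v).symm
      rw [this, real_inner_self_eq_norm_sq]
    have h8 : (T.card : ℝ)⁻¹ * (α * inner ℝ G (∑ x ∈ T, g x)) = α * ‖G‖ ^ 2 := by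
      rw [← h7, real_inner_smul_right]; ring
    calc (T.card : ℝ)⁻¹ * ∑ x ∈ T, F (v - α • g x)
        ≤ (T.card : ℝ)⁻¹ * ((T.card : ℝ) * F v - α * inner ℝ G (∑ x ∈ T, g x)
            + (L / 2 * α ^ 2) * ∑ x ∈ T, ‖g x‖ ^ 2) := by
          rw [← h6]; exact mul_le_mul_of_nonneg_left h5 (by positivity)
      _ = F v - (T.card : ℝ)⁻¹ * (α * inner ℝ G (∑ x ∈ T, g x))
            + (L / 2 * α ^ 2) * ((T.card : ℝ)⁻¹ * ∑ x ∈ T, ‖g x‖ ^ 2) := by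
          field_simp
      _ = F v - α * ‖G‖ ^ 2
            + (L / 2 * α ^ 2) * ((T.card : ℝ)⁻¹ * ∑ x ∈ T, ‖g x‖ ^ 2) := by rw [h8]
  have hsm := hsecond v
  have h9 : (T.card : ℝ)⁻¹ * ∑ x ∈ T, F (v - α • g x)
      ≤ F v - γ * ‖G‖ ^ 2 + α ^ 2 * L * M / 2 := by
    have h10 : (L / 2 * α ^ 2) * ((T.card : ℝ)⁻¹ * ∑ x ∈ T, ‖g x‖ ^ 2)
        ≤ (L / 2 * α ^ 2) * (M + MG * ‖G‖ ^ 2) :=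
      mul_le_mul_of_nonneg_left hsm (by positivity)
    have h11 : F v - α * ‖G‖ ^ 2 + (L / 2 * α ^ 2) * (M + MG * ‖G‖ ^ 2)
        = F v - γ * ‖G‖ ^ 2 + α ^ 2 * L * M / 2 := by rw [hγ]; ring
    linarith
  have hPLv := hPL v
  have hminv := hmin v
  have h12 : - (γ * ‖G‖ ^ 2) ≤ - (γ * c * (F v - F wstar)) := by
    have := mul_le_mul_of_nonneg_left hPLv hγ0
    nlinarith [mul_nonneg (mul_nonneg hγ0 hc.le) (sub_nonneg.mpr hminv)]
  have : F v - γ * c * (F v - F wstar) + α ^ 2 * L * M / 2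
      = (1 - γ * c) * (F v - F wstar) + F wstar + α ^ 2 * L * M / 2 := by ring
  linarith

end Step

section StepExp
variable {H 𝒟 : Type*} [NormedAddCommGroup H] [InnerProductSpace ℝ H] [CompleteSpace H]

lemma step_exp (ℓ : H → 𝒟 → ℝ) (L M MG α γ c : ℝ)
    (hL : 0 < L) (hα : 0 < α)
    (hγ : γ = α * (1 - α * L * MG / 2)) (hγ0 : 0 ≤ γ) (hc : 0 < c)
    (hdiff : ∀ x : 𝒟, Differentiable ℝ (fun w => ℓ w x))
    (hLip : ∀ (x : 𝒟) (w u : H),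
      ‖gradient (fun v => ℓ v x) w - gradient (fun v => ℓ v x) u‖ ≤ L * ‖w - u‖)
    (T : Finset 𝒟) (hT : T.Nonempty) (wstar : H)
    (hsecond : ∀ w : H, (T.card : ℝ)⁻¹ * ∑ x ∈ T, ‖gradient (fun v => ℓ v x) w‖ ^ 2
        ≤ M + MG * ‖gradient (empLoss ℓ T) w‖ ^ 2)
    (hmin : ∀ w : H, empLoss ℓ T wstar ≤ empLoss ℓ T w)
    (hPL : ∀ w : H, 2 * c * (empLoss ℓ T w - empLoss ℓ T wstar)
        ≤ ‖gradient (empLoss ℓ T) w‖ ^ 2)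
    {Ω Ω' : Type*} [Fintype Ω] [Fintype Ω'] [Nonempty Ω']
    (e : Ω ≃ Ω' × {x // x ∈ T}) (v : Ω' → H) (next cur : Ω → H)
    (hnext : ∀ ω, next ω
      = v (e ω).1 - α • gradient (fun z => ℓ z ((e ω).2 : 𝒟)) (v (e ω).1))
    (hcur : ∀ ω, cur ω = v (e ω).1) :
    unifExp (fun ω => empLoss ℓ T (next ω))
      ≤ (1 - γ * c) * (unifExp (fun ω => empLoss ℓ T (cur ω)) - empLoss ℓ T wstar)
        + empLoss ℓ T wstar + α ^ 2 * L * M / 2 := by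
  set F := empLoss ℓ T with hF
  have haveT : Nonempty {x // x ∈ T} := ⟨⟨hT.choose, hT.choose_spec⟩⟩
  -- rewrite as expectations over the product
  have h1 : unifExp (fun ω => F (next ω))
      = unifExp (fun p : Ω' × {x // x ∈ T} =>
          F (v p.1 - α • gradient (fun z => ℓ z (p.2 : 𝒟)) (v p.1))) := by
    rw [← unifExp_comp_equiv e]
    exact unifExp_congr fun ω => by rw [hnext ω]
  have h2 : unifExp (fun ω => F (cur ω)) = unifExp (fun a : Ω' => F (v a)) := by
    have ha : unifExp (fun ω => F (cur ω))
        = unifExp (fun p : Ω' × {x // x ∈ T} => F (v p.1)) := by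
      rw [← unifExp_comp_equiv e (g := fun p : Ω' × {x // x ∈ T} => F (v p.1))]
      exact unifExp_congr fun ω => by rw [hcur ω]
    rw [ha]
    exact unifExp_fst (g := fun a : Ω' => F (v a))
  rw [h1, h2, unifExp_prod]
  have h3 : ∀ a : Ω',
      unifExp (fun y : {x // x ∈ T} =>
        F (v a - α • gradient (fun z => ℓ z (y : 𝒟)) (v a)))
      ≤ (1 - γ * c) * F (v a) + ((γ * c) * F wstar + α ^ 2 * L * M / 2) := by
    intro a
    have := step_avg ℓ L M MG α γ c hL hα hγ hγ0 hc hdiff hLip T hT wstar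
      hsecond hmin hPL (v a)
    have heq : unifExp (fun y : {x // x ∈ T} =>
        F (v a - α • gradient (fun z => ℓ z (y : 𝒟)) (v a)))
        = (T.card : ℝ)⁻¹ * ∑ x ∈ T, F (v a - α • gradient (fun z => ℓ z x) (v a)) :=
      unifExp_subtype T (fun x => F (v a - α • gradient (fun z => ℓ z x) (v a)))
    rw [heq]
    calc (T.card : ℝ)⁻¹ * ∑ x ∈ T, F (v a - α • gradient (fun z => ℓ z x) (v a))
        ≤ (1 - γ * c) * (F (v a) - F wstar) + F wstar + α ^ 2 * L * M / 2 := this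
      _ = (1 - γ * c) * F (v a) + ((γ * c) * F wstar + α ^ 2 * L * M / 2) := by ring
  calc unifExp (fun a : Ω' => unifExp (fun y : {x // x ∈ T} =>
          F (v a - α • gradient (fun z => ℓ z (y : 𝒟)) (v a))))
      ≤ unifExp (fun a : Ω' =>
          (1 - γ * c) * F (v a) + ((γ * c) * F wstar + α ^ 2 * L * M / 2)) :=
        unifExp_mono h3
    _ = (1 - γ * c) * unifExp (fun a : Ω' => F (v a))
          + ((γ * c) * F wstar + α ^ 2 * L * M / 2) := unifExp_affine _ _ _
    _ = (1 - γ * c) * (unifExp (fun a : Ω' => F (v a)) - F wstar) + F wstar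
          + α ^ 2 * L * M / 2 := by ring

end StepExp


/-- Split out the `(i₀, j)` coordinate of a doubly-indexed dependent function type. -/
def pairSplit {ι J : Type*} [DecidableEq ι] [DecidableEq J] (β : ι → Type*)
    (i₀ : ι) (j : J) :
    ((i : ι) → J → β i) ≃
      ((({k : J // k ≠ j} → β i₀) × ((i : {i' : ι // i' ≠ i₀}) → J → β i.val)) × β i₀) where
  toFun ω := ((fun k => ω i₀ k.val, fun i k => ω i.val k), ω i₀ j)
  invFun p i k :=
    if h : i = i₀ then
      h.symm ▸ (if hk : k = j then p.2 else p.1.1 ⟨k, hk⟩)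
    else p.1.2 ⟨i, h⟩ k
  left_inv ω := by
    funext i k
    by_cases h : i = i₀
    · subst h
      by_cases hk : k = j
      · subst hk; simp
      · simp [hk]
    · simp [h]
  right_inv p := by
    apply Prod.ext
    · apply Prod.ext
      · funext k
        simp [k.2]
      · funext i k
        simp [i.2]
    · simp

lemma pairSplit_update {ι J : Type*} [DecidableEq ι] [DecidableEq J] {β : ι → Type*}
    {i₀ : ι} {j : J} (ω : (i : ι) → J → β i) (y : β i₀) (i : ι) (k : J)
    (h : i ≠ i₀ ∨ k ≠ j) :
    (pairSplit β i₀ j).symm (((pairSplit β i₀ j) ω).1, y) i k = ω i k := by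
  by_cases hi : i = i₀
  · subst hi
    rcases h with h | hk
    · exact absurd rfl h
    · simp [pairSplit, hk]
  · simp [pairSplit, hi]

/-- Split out the `j`-th coordinate of the second factor. -/
def prodFunSplit {A J β : Type*} [DecidableEq J] (j : J) :
    (A × (J → β)) ≃ ((A × ({k : J // k ≠ j} → β)) × β) where
  toFun p := ((p.1, fun k => p.2 k.val), p.2 j)
  invFun q := (q.1.1, fun k => if hk : k = j then q.2 else q.1.2 ⟨k, hk⟩)
  left_inv p := by
    apply Prod.ext
    · rfl
    · funext k
      by_cases hk : k = j
      · subst hk; simp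
      · simp [hk]
  right_inv q := by
    apply Prod.ext
    · apply Prod.ext
      · rfl
      · funext k
        simp [k.2]
    · simp

lemma prodFunSplit_update_fst {A J β : Type*} [DecidableEq J] {j : J}
    (p : A × (J → β)) (y : β) :
    ((prodFunSplit j).symm (((prodFunSplit j) p).1, y)).1 = p.1 := rfl

lemma prodFunSplit_update {A J β : Type*} [DecidableEq J] {j : J}
    (p : A × (J → β)) (y : β) (k : J) (hk : k ≠ j) :
    ((prodFunSplit j).symm (((prodFunSplit j) p).1, y)).2 k = p.2 k := by
  simp [prodFunSplit, hk]


lemma step_shift {q A s En Ec Fs : ℝ} (h : En ≤ q * (Ec - Fs) + Fs + s)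
    (hqA : q * A + s = A) : En - Fs - A ≤ q * (Ec - Fs - A) := by
  have h2 : q * (Ec - Fs - A) = q * (Ec - Fs) - q * A := by ring
  linarith

lemma geom_rec {q A : ℝ} (hq0 : 0 ≤ q) (E : ℕ → ℝ) (N : ℕ)
    (hstep : ∀ m, m < N → E (m + 1) - A ≤ q * (E m - A)) :
    ∀ n, n ≤ N → E n - A ≤ q ^ n * (E 0 - A) := by
  intro n
  induction n with
  | zero => intro _; simp
  | succ m ih =>
    intro hm
    calc E (m + 1) - A ≤ q * (E m - A) := hstep m (by omega)
      _ ≤ q * (q ^ m * (E 0 - A)) :=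
          mul_le_mul_of_nonneg_left (ih (by omega)) hq0
      _ = q ^ (m + 1) * (E 0 - A) := by ring

set_option maxHeartbeats 4000000 in
/-- Corollary 1 of the paper, case `T > B_d(n_c+n_o)`. Under the
extra boundedness assumption — there are stationary global minimizers `u_b` of each
`ℒ_b`, and all iterates (including those of the final block) together with `w*` and
the `u_b`'s pairwise lie within distance `D` of one another — after a final block of
`n_l ≥ 0` SGD updates with fresh i.i.d. uniform samples from `𝒳 = X̃_{B_d+1}`,
`E[L(w_{B_l}^{n_l})] − L(w*) ≤ α²LM/(2γc)
 + (1/B_d)(1−γc)^{n_l} ∑_{l=0}^{B_d−1} (1−γc)^{l n_p} (LD²/2 − α²LM/(2γc))`. -/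
theorem corollary1_case2
    {H 𝒟 : Type*} [NormedAddCommGroup H] [InnerProductSpace ℝ H] [CompleteSpace H]
    [DecidableEq 𝒟]
    (ℓ : H → 𝒟 → ℝ) (L M MG α γ c D : ℝ)
    (hL : 0 < L) (hM : 0 ≤ M) (hMG : 1 ≤ MG)
    (hα : 0 < α) (hα2 : α ≤ 2 / (L * MG))
    (hγ : γ = α * (1 - α * L * MG / 2))
    (hc : 0 < c) (hγc : γ * c ≤ 1) (hD : 0 < D)
    (hdiff : ∀ x : 𝒟, Differentiable ℝ (fun w => ℓ w x))
    (hLip : ∀ (x : 𝒟) (w u : H),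
      ‖gradient (fun v => ℓ v x) w - gradient (fun v => ℓ v x) u‖ ≤ L * ‖w - u‖)
    (Bd nc np : ℕ) (hBd : 1 ≤ Bd) (hnc : 1 ≤ nc) (hnp : 1 ≤ np)
    (X : ℕ → Finset 𝒟)
    (hcard : ∀ i, 1 ≤ i → i ≤ Bd → (X i).card = nc)
    (hdisj : ∀ i j, 1 ≤ i → i ≤ Bd → 1 ≤ j → j ≤ Bd → i ≠ j → Disjoint (X i) (X j))
    (wstar winit : H)
    (hsecond : ∀ b, 2 ≤ b → b ≤ Bd + 1 → ∀ w : H,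
      ((availSet X b).card : ℝ)⁻¹ * ∑ x ∈ availSet X b, ‖gradient (fun v => ℓ v x) w‖ ^ 2
        ≤ M + MG * ‖gradient (empLoss ℓ (availSet X b)) w‖ ^ 2)
    (hmin : ∀ b, 2 ≤ b → b ≤ Bd + 1 → ∀ w : H,
      empLoss ℓ (availSet X b) wstar ≤ empLoss ℓ (availSet X b) w)
    (hPL : ∀ b, 2 ≤ b → b ≤ Bd + 1 → ∀ w : H,
      2 * c * (empLoss ℓ (availSet X b) w - empLoss ℓ (availSet X b) wstar)
        ≤ ‖gradient (empLoss ℓ (availSet X b)) w‖ ^ 2)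
    -- the random iterates of the pipelined blocks:
    -- `W ω b j` is the iterate `w_b^j` under realization `ω`
    (W : SampleSpace X Bd np → ℕ → ℕ → H)
    (hW1 : ∀ ω, ∀ j ≤ np, W ω 1 j = winit)
    (hW0 : ∀ ω, ∀ b, 2 ≤ b → b ≤ Bd → W ω b 0 = W ω (b - 1) np)
    (hWstep : ∀ (ω : SampleSpace X Bd np) (i : Fin (Bd - 1)) (j : Fin np),
      W ω (i.val + 2) (j.val + 1)
        = W ω (i.val + 2) j.val
          - α • gradient (fun v => ℓ v (ω i j : 𝒟)) (W ω (i.val + 2) j.val))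
    -- the final block: `n_l` further updates with fresh i.i.d. uniform samples from `𝒳`
    (nl : ℕ)
    (V : SampleSpace X Bd np × (Fin nl → {x // x ∈ availSet X (Bd + 1)}) → ℕ → H)
    (hV0 : ∀ ω, V ω 0 = W ω.1 Bd np)
    (hVstep : ∀ (ω : SampleSpace X Bd np × (Fin nl → {x // x ∈ availSet X (Bd + 1)}))
        (j : Fin nl),
      V ω (j.val + 1)
        = V ω j.val - α • gradient (fun v => ℓ v (ω.2 j : 𝒟)) (V ω j.val))
    -- boundedness assumption: stationary global minimizers of the per-block losses
    -- `ℒ_b`, and a diameter bound `D` on all relevant points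
    (u : ℕ → H)
    (hu : ∀ b, 1 ≤ b → b ≤ Bd →
      gradient (empLoss ℓ (X b)) (u b) = 0
        ∧ ∀ w : H, empLoss ℓ (X b) (u b) ≤ empLoss ℓ (X b) w)
    (hdiam : ∀ (ω : SampleSpace X Bd np × (Fin nl → {x // x ∈ availSet X (Bd + 1)}))
        (p q : H),
      (p = wstar ∨ (∃ b, 1 ≤ b ∧ b ≤ Bd ∧ p = u b)
          ∨ (∃ b j, 1 ≤ b ∧ b ≤ Bd ∧ j ≤ np ∧ p = W ω.1 b j)
          ∨ (∃ j, j ≤ nl ∧ p = V ω j)) →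
      (q = wstar ∨ (∃ b, 1 ≤ b ∧ b ≤ Bd ∧ q = u b)
          ∨ (∃ b j, 1 ≤ b ∧ b ≤ Bd ∧ j ≤ np ∧ q = W ω.1 b j)
          ∨ (∃ j, j ≤ nl ∧ q = V ω j)) →
      ‖p - q‖ ≤ D) :
    unifExp (fun ω : SampleSpace X Bd np × (Fin nl → {x // x ∈ availSet X (Bd + 1)}) =>
        empLoss ℓ (availSet X (Bd + 1)) (V ω nl))
        - empLoss ℓ (availSet X (Bd + 1)) wstar
      ≤ α ^ 2 * L * M / (2 * γ * c)
        + (1 / (Bd : ℝ)) * (1 - γ * c) ^ nl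
          * ∑ l ∈ Finset.range Bd,
              (1 - γ * c) ^ (l * np)
                * (L * D ^ 2 / 2 - α ^ 2 * L * M / (2 * γ * c)) 
 := by
  classical
  -- basic scalar facts
  have hMG0 : (0:ℝ) < MG := lt_of_lt_of_le one_pos hMG
  have hLMG : (0:ℝ) < L * MG := mul_pos hL hMG0
  have hαLMG : α * (L * MG) ≤ 2 := (le_div_iff₀ hLMG).mp hα2
  have hγ0 : 0 ≤ γ := by
    rw [hγ]; apply mul_nonneg hα.le; nlinarith
  have hγc0 : 0 ≤ γ * c := mul_nonneg hγ0 hc.le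
  have hq0 : (0:ℝ) ≤ 1 - γ * c := by linarith
  have hBdR : (0:ℝ) < (Bd:ℝ) := by exact_mod_cast hBd
  -- nonemptiness
  have hX1ne : (X 1).Nonempty := by
    apply Finset.card_pos.mp; rw [hcard 1 le_rfl hBd]; omega
  have hAvailne : ∀ b, 2 ≤ b → (availSet X b).Nonempty := by
    intro b hb
    obtain ⟨x, hx⟩ := hX1ne
    exact ⟨x, Finset.mem_biUnion.mpr ⟨1, Finset.mem_Icc.mpr ⟨le_rfl, by omega⟩, hx⟩⟩
  have hTne : ∀ i : Fin (Bd - 1), Nonempty {x // x ∈ availSet X (i.val + 2)} := by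
    intro i
    obtain ⟨x, hx⟩ := hAvailne (i.val + 2) (by omega)
    exact ⟨⟨x, hx⟩⟩
  haveI hSSne : Nonempty (SampleSpace X Bd np) := ⟨fun i _ => (hTne i).some⟩
  haveI hTBd : Nonempty {x // x ∈ availSet X (Bd + 1)} := by
    obtain ⟨x, hx⟩ := hAvailne (Bd + 1) (by omega)
    exact ⟨⟨x, hx⟩⟩
  haveI hFun : Nonempty (Fin nl → {x // x ∈ availSet X (Bd + 1)}) := ⟨fun _ => hTBd.some⟩
  set f₀ : Fin nl → {x // x ∈ availSet X (Bd + 1)} := hFun.some with hf₀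
  -- differentiability and stationary-point facts
  have hEdiff : ∀ S : Finset 𝒟, Differentiable ℝ (empLoss ℓ S) :=
    fun S => empLoss_differentiable ℓ hdiff S
  have hgradstar : ∀ b, 2 ≤ b → b ≤ Bd + 1 →
      gradient (empLoss ℓ (availSet X b)) wstar = 0 :=
    fun b h2 h3 => gradient_eq_zero_of_min (hEdiff _) (hmin b h2 h3)
  have hKb : ∀ (S : Finset 𝒟) (v0 w : H), gradient (empLoss ℓ S) v0 = 0 →
      ‖w - v0‖ ≤ D → empLoss ℓ S w ≤ empLoss ℓ S v0 + L * D ^ 2 / 2 := by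
    intro S v0 w h0 hwD
    have h1 := descent_lemma (hEdiff S) (empLoss_lipschitz_grad ℓ hL.le hdiff hLip S) v0 w
    rw [h0] at h1
    simp only [inner_zero_left] at h1
    have h2 : ‖w - v0‖ ^ 2 ≤ D ^ 2 := by nlinarith [norm_nonneg (w - v0)]
    nlinarith
  -- cardinalities
  have hcardAvail : ∀ b, b ≤ Bd + 1 → (availSet X b).card = (b - 1) * nc := by
    intro b hb
    unfold availSet
    rw [Finset.card_biUnion]
    · rw [Finset.sum_congr rfl fun i hi => hcard i (Finset.mem_Icc.mp hi).1
        (by have := (Finset.mem_Icc.mp hi).2; omega)]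
      rw [Finset.sum_const, Nat.card_Icc, smul_eq_mul]
      congr 1
    · intro i hi j hj hij
      exact hdisj i j (Finset.mem_Icc.mp hi).1
        (by have := (Finset.mem_Icc.mp hi).2; omega)
        (Finset.mem_Icc.mp hj).1
        (by have := (Finset.mem_Icc.mp hj).2; omega) hij
  -- congruence lemma for W
  have Wcongr : ∀ b, 1 ≤ b → b ≤ Bd → ∀ jj, jj ≤ np →
      ∀ ω ω' : SampleSpace X Bd np,
      (∀ (i : Fin (Bd - 1)) (k : Fin np),
        (i.val + 2 < b ∨ (i.val + 2 = b ∧ k.val < jj)) → ω i k = ω' i k) →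
      W ω b jj = W ω' b jj := by
    intro b hb1
    induction b, hb1 using Nat.le_induction with
    | base =>
      intro _ jj hjj ω ω' _
      rw [hW1 ω jj hjj, hW1 ω' jj hjj]
    | succ b hb1 ih =>
      intro hbBd jj
      induction jj with
      | zero =>
        intro _ ω ω' hagree
        have h0 := hW0 ω (b+1) (by omega) hbBd
        have h0' := hW0 ω' (b+1) (by omega) hbBd
        simp only [Nat.add_sub_cancel] at h0 h0'
        rw [h0, h0']
        exact ih (by omega) np le_rfl ω ω' fun i k hik =>
          hagree i k (Or.inl (by rcases hik with h | ⟨h, _⟩ <;> omega))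
      | succ m ihm =>
        intro hm ω ω' hagree
        have hmlt : m < np := by omega
        have hlt : b - 1 < Bd - 1 := by omega
        have hveq : W ω (b+1) m = W ω' (b+1) m :=
          ihm (by omega) ω ω' fun i k hik => hagree i k (by
            rcases hik with h | ⟨h1, h2⟩
            · exact Or.inl h
            · exact Or.inr ⟨h1, by omega⟩)
        have hξ : ω ⟨b-1, hlt⟩ ⟨m, hmlt⟩ = ω' ⟨b-1, hlt⟩ ⟨m, hmlt⟩ :=
          hagree _ _ (Or.inr ⟨by show b - 1 + 2 = b + 1; omega,
            by show m < m + 1; omega⟩)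
        have hs1 := hWstep ω ⟨b-1, hlt⟩ ⟨m, hmlt⟩
        have hs2 := hWstep ω' ⟨b-1, hlt⟩ ⟨m, hmlt⟩
        simp only [Fin.val_mk] at hs1 hs2
        have hidx : b - 1 + 2 = b + 1 := by omega
        rw [← hidx] at hveq ⊢
        rw [hs1, hs2, hveq, hξ]
  -- congruence lemma for V
  have Vcongr : ∀ n, n ≤ nl → ∀ (a : SampleSpace X Bd np)
      (f f' : Fin nl → {x // x ∈ availSet X (Bd + 1)}),
      (∀ k : Fin nl, k.val < n → f k = f' k) → V (a, f) n = V (a, f') n := by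
    intro n
    induction n with
    | zero => intro _ a f f' _; rw [hV0, hV0]
    | succ m ihm =>
      intro hm a f f' hagree
      have hmlt : m < nl := by omega
      have hs1 := hVstep (a, f) ⟨m, hmlt⟩
      have hs2 := hVstep (a, f') ⟨m, hmlt⟩
      simp only [Fin.val_mk] at hs1 hs2
      rw [hs1, hs2, ihm (by omega) a f f' fun k hk => hagree k (by omega)]
      have : f ⟨m, hmlt⟩ = f' ⟨m, hmlt⟩ := hagree _ (by show m < m + 1; omega)
      simp only [this]
  -- diameter facts
  have hWD : ∀ (ω : SampleSpace X Bd np) (b j : ℕ), 1 ≤ b → b ≤ Bd → j ≤ np →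
      ∀ p : H, (p = wstar ∨ ∃ b', 1 ≤ b' ∧ b' ≤ Bd ∧ p = u b') →
      ‖W ω b j - p‖ ≤ D := by
    intro ω b j hb1 hb2 hj p hp
    apply hdiam (ω, f₀) (W ω b j) p
    · exact Or.inr (Or.inr (Or.inl ⟨b, j, hb1, hb2, hj, rfl⟩))
    · rcases hp with h | ⟨b', h1, h2, h3⟩
      · exact Or.inl h
      · exact Or.inr (Or.inl ⟨b', h1, h2, h3⟩)
  -- case split on γ * c
  rcases eq_or_lt_of_le hγc0 with hγczero | hγcpos
  · -- degenerate case: γ * c = 0, bound is just the smoothness bound L D²/2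
    have h2γc : 2 * γ * c = 0 := by rw [mul_assoc, ← hγczero, mul_zero]
    rw [h2γc, div_zero, ← hγczero]
    simp only [sub_zero, one_pow, one_mul]
    rw [Finset.sum_const, Finset.card_range, nsmul_eq_mul]
    have hsimp : 1 / (Bd:ℝ) * 1 * ((Bd:ℝ) * (L * D ^ 2 / 2)) = L * D ^ 2 / 2 := by
      field_simp
    rw [hsimp, zero_add]
    rw [sub_le_iff_le_add]
    apply unifExp_le
    intro ω
    have := hKb (availSet X (Bd+1)) wstar (V ω nl)
      (hgradstar (Bd+1) (by omega) le_rfl)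
      (hdiam ω (V ω nl) wstar (Or.inr (Or.inr (Or.inr ⟨nl, le_rfl, rfl⟩)))
        (Or.inl rfl))
    linarith
  -- main case : 0 < γ * c
  have hγcne : γ * c ≠ 0 := ne_of_gt hγcpos
  have hγne : γ ≠ 0 := fun h => hγcne (by rw [h, zero_mul])
  have hcne : c ≠ 0 := ne_of_gt hc
  have hqA : (1 - γ * c) * (α ^ 2 * L * M / (2 * γ * c)) + α ^ 2 * L * M / 2
      = α ^ 2 * L * M / (2 * γ * c) := by
    field_simp
    ring
  -- one SGD step inside a pipelined block, in expectation
  have blockstep : ∀ b, 2 ≤ b → b ≤ Bd → ∀ m, m < np →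
      unifExp (fun ω : SampleSpace X Bd np =>
          empLoss ℓ (availSet X b) (W ω b (m + 1)))
        ≤ (1 - γ * c) * (unifExp (fun ω : SampleSpace X Bd np =>
              empLoss ℓ (availSet X b) (W ω b m))
            - empLoss ℓ (availSet X b) wstar)
          + empLoss ℓ (availSet X b) wstar + α ^ 2 * L * M / 2 := by
    intro b hb2 hbBd m hm
    obtain ⟨i₀, rfl⟩ : ∃ i₀ : Fin (Bd - 1), b = i₀.val + 2 :=
      ⟨⟨b - 2, by omega⟩, by show b = b - 2 + 2; omega⟩
    set jf : Fin np := ⟨m, hm⟩ with hjf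
    set β : Fin (Bd - 1) → Type _ :=
      fun i => {x // x ∈ availSet X (i.val + 2)} with hβ
    set e := pairSplit β i₀ jf with he
    set y₀ : β i₀ := (hTne i₀).some with hy₀
    haveI : Nonempty (({k : Fin np // k ≠ jf} → β i₀) ×
        ((i : {i' : Fin (Bd - 1) // i' ≠ i₀}) → Fin np → β i.val)) :=
      ⟨(fun _ => (hTne i₀).some, fun i _ => (hTne i.val).some)⟩
    set v : (({k : Fin np // k ≠ jf} → β i₀) ×
        ((i : {i' : Fin (Bd - 1) // i' ≠ i₀}) → Fin np → β i.val)) → H :=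
      fun p => W (e.symm (p, y₀)) (i₀.val + 2) m with hv
    have hveq : ∀ ω : SampleSpace X Bd np, v (e ω).1 = W ω (i₀.val + 2) m := by
      intro ω
      apply Wcongr (i₀.val + 2) (by omega) hbBd m (le_of_lt hm)
      intro i k hik
      apply pairSplit_update
      rcases hik with h | ⟨h1, h2⟩
      · left; rintro rfl; omega
      · right; rintro rfl
        exact absurd h2 (by show ¬ (m < m); omega)
    have hnext : ∀ ω : SampleSpace X Bd np, W ω (i₀.val + 2) (m + 1)
        = v (e ω).1 - α • gradient (fun z => ℓ z (((e ω).2 : β i₀) : 𝒟)) (v (e ω).1) := by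
      intro ω
      rw [hveq ω]
      exact hWstep ω i₀ jf
    have hcur : ∀ ω : SampleSpace X Bd np, W ω (i₀.val + 2) m = v (e ω).1 :=
      fun ω => (hveq ω).symm
    exact step_exp ℓ L M MG α γ c hL hα hγ hγ0 hc hdiff hLip
      (availSet X (i₀.val + 2)) (hAvailne _ (by omega)) wstar
      (hsecond _ (by omega) (by have := i₀.isLt; omega))
      (hmin _ (by omega) (by have := i₀.isLt; omega))
      (hPL _ (by omega) (by have := i₀.isLt; omega))
      e v _ _ hnext hcur
  -- iterate the one-step bound within a block
  have iterW : ∀ b, 2 ≤ b → b ≤ Bd → ∀ n, n ≤ np →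
      unifExp (fun ω : SampleSpace X Bd np =>
          empLoss ℓ (availSet X b) (W ω b n))
        - empLoss ℓ (availSet X b) wstar - α ^ 2 * L * M / (2 * γ * c)
      ≤ (1 - γ * c) ^ n * (unifExp (fun ω : SampleSpace X Bd np =>
          empLoss ℓ (availSet X b) (W ω b 0))
        - empLoss ℓ (availSet X b) wstar - α ^ 2 * L * M / (2 * γ * c)) := by
    intro b hb2 hbBd
    have := geom_rec (A := α ^ 2 * L * M / (2 * γ * c)) hq0
      (fun n => unifExp (fun ω : SampleSpace X Bd np =>
          empLoss ℓ (availSet X b) (W ω b n))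
        - empLoss ℓ (availSet X b) wstar) np
      (fun m hm => step_shift (blockstep b hb2 hbBd m hm) hqA)
    exact fun n hn => this n hn
  -- decomposition of the empirical losses
  have hdecomp : ∀ b, 2 ≤ b → b ≤ Bd → ∀ w : H,
      empLoss ℓ (availSet X (b+1)) w
        = (((b:ℝ) - 1)/(b:ℝ)) * empLoss ℓ (availSet X b) w
          + (1/(b:ℝ)) * empLoss ℓ (X b) w := by
    intro b hb2 hbBd w
    have hsplit : availSet X (b+1) = availSet X b ∪ X b := by
      unfold availSet
      ext x
      simp only [Finset.mem_biUnion, Finset.mem_union, Finset.mem_Icc,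
        Nat.add_sub_cancel]
      constructor
      · rintro ⟨i, ⟨hi1, hi2⟩, hx⟩
        by_cases hib : i = b
        · subst hib; right; exact hx
        · left; exact ⟨i, ⟨hi1, by omega⟩, hx⟩
      · rintro (⟨i, ⟨hi1, hi2⟩, hx⟩ | hx)
        · exact ⟨i, ⟨hi1, by omega⟩, hx⟩
        · exact ⟨b, ⟨by omega, by omega⟩, hx⟩
    have hdisj2 : Disjoint (availSet X b) (X b) := by
      unfold availSet
      rw [Finset.disjoint_biUnion_left]
      intro i hi
      have hi' := Finset.mem_Icc.mp hi
      exact hdisj i b hi'.1 (by omega) (by omega) hbBd (by omega)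
    have hc1 : ((availSet X b).card : ℝ) = ((b:ℝ) - 1) * (nc:ℝ) := by
      rw [hcardAvail b (by omega)]
      push_cast [Nat.cast_sub (by omega : 1 ≤ b)]
      ring
    have hc2 : ((availSet X (b+1)).card : ℝ) = (b:ℝ) * (nc:ℝ) := by
      rw [hcardAvail (b+1) (by omega)]
      push_cast [Nat.add_sub_cancel]
      ring
    have hsum : ∑ x ∈ availSet X (b+1), ℓ w x
        = ∑ x ∈ availSet X b, ℓ w x + ∑ x ∈ X b, ℓ w x := by
      rw [hsplit, Finset.sum_union hdisj2]
    unfold empLoss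
    rw [hsum, hc2, hc1, hcard b (by omega) hbBd]
    have hb0 : (b:ℝ) ≠ 0 := by positivity
    have hb1 : (b:ℝ) - 1 ≠ 0 := by
      have : (2:ℝ) ≤ (b:ℝ) := by exact_mod_cast hb2
      intro h; nlinarith
    have hnc0 : (nc:ℝ) ≠ 0 := by positivity
    field_simp
  -- cross bound on the per-block loss
  have hcross : ∀ b, 1 ≤ b → b ≤ Bd →
      unifExp (fun ω : SampleSpace X Bd np => empLoss ℓ (X b) (W ω b np))
        ≤ empLoss ℓ (X b) wstar + L * D ^ 2 / 2 := by
    intro b hb1 hbBd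
    apply unifExp_le
    intro ω
    obtain ⟨hgu, hminu⟩ := hu b hb1 hbBd
    have h1 : empLoss ℓ (X b) (W ω b np) ≤ empLoss ℓ (X b) (u b) + L * D ^ 2 / 2 :=
      hKb (X b) (u b) (W ω b np) hgu
        (hWD ω b np hb1 hbBd le_rfl (u b) (Or.inr ⟨b, hb1, hbBd, rfl⟩))
    linarith [hminu wstar]
  -- main induction over blocks
  have dbound : ∀ b, 1 ≤ b → b ≤ Bd →
      unifExp (fun ω : SampleSpace X Bd np =>
          empLoss ℓ (availSet X (b+1)) (W ω b np))
        - empLoss ℓ (availSet X (b+1)) wstar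
      ≤ α ^ 2 * L * M / (2 * γ * c)
        + (1/(b:ℝ)) * ∑ l ∈ Finset.range b,
            (1 - γ * c) ^ (l * np) * (L * D ^ 2 / 2 - α ^ 2 * L * M / (2 * γ * c)) := by
    intro b hb1
    induction b, hb1 using Nat.le_induction with
    | base =>
      intro _
      have hWwinit : unifExp (fun ω : SampleSpace X Bd np =>
          empLoss ℓ (availSet X 2) (W ω 1 np)) = empLoss ℓ (availSet X 2) winit := by
        rw [unifExp_congr (fun ω => by rw [hW1 ω np le_rfl])]
        exact unifExp_const _
      have hwD : ‖winit - wstar‖ ≤ D := by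
        have h := hWD hSSne.some 1 np le_rfl hBd le_rfl wstar (Or.inl rfl)
        rwa [hW1 hSSne.some np le_rfl] at h
      have hKw : empLoss ℓ (availSet X 2) winit
          ≤ empLoss ℓ (availSet X 2) wstar + L * D ^ 2 / 2 :=
        hKb _ wstar winit (hgradstar 2 (by omega) (by omega)) hwD
      rw [hWwinit]
      have hrhs : (1:ℝ)/((1:ℕ):ℝ) * ∑ l ∈ Finset.range 1,
          (1 - γ * c) ^ (l * np) * (L * D ^ 2 / 2 - α ^ 2 * L * M / (2 * γ * c))
          = L * D ^ 2 / 2 - α ^ 2 * L * M / (2 * γ * c) := by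
        simp [Finset.sum_range_one]
      rw [hrhs]
      linarith
    | succ b hb1 ih =>
      intro hb2
      have ihb := ih (by omega)
      have hiter := iterW (b+1) (by omega) hb2 np le_rfl
      have htrans : unifExp (fun ω : SampleSpace X Bd np =>
            empLoss ℓ (availSet X (b+1)) (W ω (b+1) 0))
          = unifExp (fun ω : SampleSpace X Bd np =>
            empLoss ℓ (availSet X (b+1)) (W ω b np)) := by
        apply unifExp_congr
        intro ω
        rw [hW0 ω (b+1) (by omega) hb2, Nat.add_sub_cancel]
      rw [htrans] at hiter
      have hY1 := hcross (b+1) (by omega) hb2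
      have hdec := hdecomp (b+1) (by omega) hb2
      rw [unifExp_congr (fun ω => hdec (W ω (b+1) np)), unifExp_add,
        unifExp_mul_left, unifExp_mul_left, hdec wstar]
      push_cast
      set Aq := α ^ 2 * L * M / (2 * γ * c) with hAq
      set Kq := L * D ^ 2 / 2 with hKq
      set Sb := ∑ l ∈ Finset.range b, (1 - γ * c) ^ (l * np) * (Kq - Aq) with hSb
      set Sb1 := ∑ l ∈ Finset.range (b+1), (1 - γ * c) ^ (l * np) * (Kq - Aq)
        with hSb1
      set U1 := unifExp (fun ω : SampleSpace X Bd np =>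
        empLoss ℓ (availSet X (b+1)) (W ω (b+1) np)) with hU1
      set U2 := unifExp (fun ω : SampleSpace X Bd np =>
        empLoss ℓ (X (b+1)) (W ω (b+1) np)) with hU2
      set Fs := empLoss ℓ (availSet X (b+1)) wstar with hFs
      set Ls := empLoss ℓ (X (b+1)) wstar with hLs
      have hbR : (1:ℝ) ≤ (b:ℝ) := by exact_mod_cast hb1
      have hbne : (b:ℝ) ≠ 0 := by linarith
      have hb1ne : (b:ℝ) + 1 ≠ 0 := by linarith
      have hX1 : U1 - Fs - Aq ≤ (1 - γ * c) ^ np * ((1/(b:ℝ)) * Sb) := by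
        refine le_trans hiter ?_
        exact mul_le_mul_of_nonneg_left (by linarith [ihb]) (pow_nonneg hq0 np)
      have hgeom : Sb1 = (1 - γ * c) ^ np * Sb + (Kq - Aq) := by
        rw [hSb1, hSb, Finset.sum_range_succ', Finset.mul_sum]
        congr 1
        · refine Finset.sum_congr rfl fun l _ => ?_
          rw [show (l+1) * np = np + l * np by ring, pow_add, mul_assoc]
        · simp
      have hc1nn : (0:ℝ) ≤ ((b:ℝ) + 1 - 1)/((b:ℝ) + 1) := by
        rw [show ((b:ℝ) + 1 - 1) = (b:ℝ) by ring]
        positivity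
      have hc2nn : (0:ℝ) ≤ 1/((b:ℝ) + 1) := by positivity
      have m1 : ((b:ℝ) + 1 - 1)/((b:ℝ) + 1) * (U1 - Fs)
          ≤ ((b:ℝ) + 1 - 1)/((b:ℝ) + 1)
            * (Aq + (1 - γ * c) ^ np * ((1/(b:ℝ)) * Sb)) :=
        mul_le_mul_of_nonneg_left (by linarith) hc1nn
      have m2 : 1/((b:ℝ) + 1) * (U2 - Ls) ≤ 1/((b:ℝ) + 1) * Kq :=
        mul_le_mul_of_nonneg_left (by linarith) hc2nn
      have heq : ((b:ℝ) + 1 - 1)/((b:ℝ) + 1)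
            * (Aq + (1 - γ * c) ^ np * ((1/(b:ℝ)) * Sb)) + 1/((b:ℝ) + 1) * Kq
          = Aq + 1/((b:ℝ) + 1) * ((1 - γ * c) ^ np * Sb + (Kq - Aq)) := by
        field_simp
        ring
      have hgeom2 : 1/((b:ℝ) + 1) * Sb1
          = 1/((b:ℝ) + 1) * ((1 - γ * c) ^ np * Sb + (Kq - Aq)) := by rw [hgeom]
      have hring : ((b:ℝ) + 1 - 1)/((b:ℝ) + 1) * U1 + 1/((b:ℝ) + 1) * U2
            - (((b:ℝ) + 1 - 1)/((b:ℝ) + 1) * Fs + 1/((b:ℝ) + 1) * Ls)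
          = ((b:ℝ) + 1 - 1)/((b:ℝ) + 1) * (U1 - Fs)
            + 1/((b:ℝ) + 1) * (U2 - Ls) := by ring
      linarith
  -- one SGD step in the final block, in expectation
  have finstep : ∀ m, m < nl →
      unifExp (fun ω : SampleSpace X Bd np ×
            (Fin nl → {x // x ∈ availSet X (Bd + 1)}) =>
          empLoss ℓ (availSet X (Bd + 1)) (V ω (m + 1)))
        ≤ (1 - γ * c) * (unifExp (fun ω : SampleSpace X Bd np ×
              (Fin nl → {x // x ∈ availSet X (Bd + 1)}) =>
              empLoss ℓ (availSet X (Bd + 1)) (V ω m))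
            - empLoss ℓ (availSet X (Bd + 1)) wstar)
          + empLoss ℓ (availSet X (Bd + 1)) wstar + α ^ 2 * L * M / 2 := by
    intro m hm
    set jf : Fin nl := ⟨m, hm⟩ with hjf
    set e := prodFunSplit (A := SampleSpace X Bd np)
      (β := {x // x ∈ availSet X (Bd + 1)}) jf with he
    set y₀ : {x // x ∈ availSet X (Bd + 1)} := hTBd.some with hy₀
    haveI : Nonempty (SampleSpace X Bd np ×
        ({k : Fin nl // k ≠ jf} → {x // x ∈ availSet X (Bd + 1)})) :=
      ⟨(hSSne.some, fun _ => y₀)⟩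
    set v : SampleSpace X Bd np ×
        ({k : Fin nl // k ≠ jf} → {x // x ∈ availSet X (Bd + 1)}) → H :=
      fun p => V (e.symm (p, y₀)) m with hv
    have hveq : ∀ ω : SampleSpace X Bd np ×
        (Fin nl → {x // x ∈ availSet X (Bd + 1)}), v (e ω).1 = V ω m := by
      intro ω
      have h1 : V (e.symm ((e ω).1, y₀)) m
          = V (ω.1, (e.symm ((e ω).1, y₀)).2) m := rfl
      have h2 := Vcongr m (le_of_lt hm) ω.1 ((e.symm ((e ω).1, y₀)).2) ω.2
        (fun k hk => prodFunSplit_update ω y₀ k (by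
          rintro rfl
          exact absurd hk (by show ¬ (m < m); omega)))
      exact h1.trans h2
    have hnext : ∀ ω : SampleSpace X Bd np ×
        (Fin nl → {x // x ∈ availSet X (Bd + 1)}),
        V ω (m + 1) = v (e ω).1
          - α • gradient (fun z => ℓ z (((e ω).2 :
              {x // x ∈ availSet X (Bd + 1)}) : 𝒟)) (v (e ω).1) := by
      intro ω
      rw [hveq ω]
      exact hVstep ω jf
    have hcur : ∀ ω : SampleSpace X Bd np ×
        (Fin nl → {x // x ∈ availSet X (Bd + 1)}), V ω m = v (e ω).1 :=
      fun ω => (hveq ω).symm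
    exact step_exp ℓ L M MG α γ c hL hα hγ hγ0 hc hdiff hLip
      (availSet X (Bd + 1)) (hAvailne _ (by omega)) wstar
      (hsecond _ (by omega) le_rfl) (hmin _ (by omega) le_rfl)
      (hPL _ (by omega) le_rfl) e v _ _ hnext hcur
  -- iterate over the final block and conclude
  have iterV := geom_rec (A := α ^ 2 * L * M / (2 * γ * c)) hq0
    (fun n => unifExp (fun ω : SampleSpace X Bd np ×
        (Fin nl → {x // x ∈ availSet X (Bd + 1)}) =>
        empLoss ℓ (availSet X (Bd + 1)) (V ω n))
      - empLoss ℓ (availSet X (Bd + 1)) wstar) nl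
    (fun m hm => step_shift (finstep m hm) hqA) nl le_rfl
  have hE0 : unifExp (fun ω : SampleSpace X Bd np ×
        (Fin nl → {x // x ∈ availSet X (Bd + 1)}) =>
        empLoss ℓ (availSet X (Bd + 1)) (V ω 0))
      = unifExp (fun ω : SampleSpace X Bd np =>
        empLoss ℓ (availSet X (Bd + 1)) (W ω Bd np)) := by
    have h1 : unifExp (fun ω : SampleSpace X Bd np ×
          (Fin nl → {x // x ∈ availSet X (Bd + 1)}) =>
          empLoss ℓ (availSet X (Bd + 1)) (V ω 0))
        = unifExp (fun ω : SampleSpace X Bd np ×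
          (Fin nl → {x // x ∈ availSet X (Bd + 1)}) =>
          empLoss ℓ (availSet X (Bd + 1)) (W ω.1 Bd np)) := by
      apply unifExp_congr
      intro ω
      rw [hV0 ω]
    rw [h1]
    exact unifExp_fst (Ω₂ := Fin nl → {x // x ∈ availSet X (Bd + 1)})
      (fun a : SampleSpace X Bd np => empLoss ℓ (availSet X (Bd + 1)) (W a Bd np))
  rw [hE0] at iterV
  have hdb := dbound Bd hBd le_rfl
  have hfinal : unifExp (fun ω : SampleSpace X Bd np ×
        (Fin nl → {x // x ∈ availSet X (Bd + 1)}) =>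
        empLoss ℓ (availSet X (Bd + 1)) (V ω nl))
      - empLoss ℓ (availSet X (Bd + 1)) wstar - α ^ 2 * L * M / (2 * γ * c)
      ≤ (1 - γ * c) ^ nl * ((1/(Bd:ℝ)) * ∑ l ∈ Finset.range Bd,
          (1 - γ * c) ^ (l * np)
            * (L * D ^ 2 / 2 - α ^ 2 * L * M / (2 * γ * c))) :=
    le_trans iterV (mul_le_mul_of_nonneg_left (by linarith [hdb])
      (pow_nonneg hq0 nl))
  have hring2 : (1 - γ * c) ^ nl * ((1/(Bd:ℝ)) * ∑ l ∈ Finset.range Bd,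
        (1 - γ * c) ^ (l * np)
          * (L * D ^ 2 / 2 - α ^ 2 * L * M / (2 * γ * c)))
      = 1/(Bd:ℝ) * (1 - γ * c) ^ nl * ∑ l ∈ Finset.range Bd,
        (1 - γ * c) ^ (l * np)
          * (L * D ^ 2 / 2 - α ^ 2 * L * M / (2 * γ * c)) := by ring
  linarith
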